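/- Let ι be an index set, let C ⊆ ℝmax^ι be max-plus convex and stable under directed sups and filtered infs, and let y ∈ ℝmax^ι with y ∉ C. Assume the Archimedean condition: for every v ∈ C there exists a real number λ such that v + λ ≤ y componentwise. Then there exist w', w'' ∈ ℝmax^ι and d', d'' ∈ ℝmax such that max(⟨w', x⟩, d') = max(⟨w'', x⟩, d'') for every x ∈ C, while max(⟨w', y⟩, d') ≠ max(⟨w'', y⟩, d''), where ⟨w, x⟩ := sup over i ∈ ι of (w_i + x_i), a supremum taken in [-∞, +∞]. -/

import Mathlib

noncomputable section

/-- `ℝmax = ℝ ∪ {-∞}`, the max-plus semifield. -/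
abbrev Rmax := WithBot ℝ

/-- the embedding of `ℝmax = ℝ ∪ {-∞}` into `ℝ̄ = [-∞,+∞]`. -/
def Rmax.toE : Rmax → EReal := WithBot.recBotCoe ⊥ (fun r : ℝ => (r : EReal))

/-- max-plus convexity of a subset of `ℝmax^ι`. -/
def MPConvexI {ι : Type} (C : Set (ι → Rmax)) : Prop :=
  ∀ x ∈ C, ∀ y ∈ C, ∀ α β : Rmax, max α β = 0 →
    (fun i => max (α + x i) (β + y i)) ∈ C

/-- a max-plus subsemimodule of `ℝmax^ι`: contains the bottom vector, stable
under componentwise max and under addition of scalars. -/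
def MPSubmoduleI {ι : Type} (V : Set (ι → Rmax)) : Prop :=
  (fun _ => ⊥) ∈ V ∧ (∀ x ∈ V, ∀ y ∈ V, x ⊔ y ∈ V) ∧
    (∀ x ∈ V, ∀ lam : Rmax, (fun i => x i + lam) ∈ V)

/-- stability under sups of bounded directed subsets. -/
def DirStable {ι : Type} (C : Set (ι → Rmax)) : Prop :=
  ∀ D ⊆ C, D.Nonempty → DirectedOn (· ≤ ·) D → BddAbove D → sSup D ∈ C

/-- stability under infs of filtered subsets. -/
def FiltStable {ι : Type} (C : Set (ι → Rmax)) : Prop :=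
  ∀ F ⊆ C, F.Nonempty → DirectedOn (· ≥ ·) F → sInf F ∈ C

namespace Sep
def negB : Rmax → Rmax := WithBot.map (fun r : ℝ => -r)
@[simp] lemma negB_bot : negB ⊥ = ⊥ := rfl
@[simp] lemma negB_coe (r : ℝ) : negB (r : Rmax) = ((-r : ℝ) : Rmax) := rfl
@[simp] lemma toE_bot : Rmax.toE ⊥ = ⊥ := rfl
@[simp] lemma toE_coe (r : ℝ) : Rmax.toE (r : Rmax) = (r : EReal) := rfl
@[simp] lemma toE_zero : Rmax.toE (0 : Rmax) = 0 := rfl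

lemma toE_le_toE_iff {a b : Rmax} : Rmax.toE a ≤ Rmax.toE b ↔ a ≤ b := by
  induction a using WithBot.recBotCoe with
  | bot => simp
  | coe r =>
    induction b using WithBot.recBotCoe with
    | bot => simp [Rmax.toE]
    | coe s => simp [EReal.coe_le_coe_iff]

lemma toE_coe_le_coe {a : Rmax} {c : ℝ} : Rmax.toE a ≤ (c : EReal) ↔ a ≤ (c : Rmax) := by
  rw [← toE_coe c, toE_le_toE_iff]

-- key1: from negB a + x ≤ c and (a = ⊥ → x = ⊥), get x + (-c) ≤ a
lemma key1 {a x : Rmax} {c : ℝ} (hbot : a = ⊥ → x = ⊥) (h : negB a + x ≤ (c : Rmax)) :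
    x + ((-c : ℝ) : Rmax) ≤ a := by
  induction a using WithBot.recBotCoe with
  | bot => simp [hbot rfl]
  | coe r =>
    induction x using WithBot.recBotCoe with
    | bot => simp
    | coe s =>
      rw [negB_coe, ← WithBot.coe_add, WithBot.coe_le_coe] at h
      rw [← WithBot.coe_add, WithBot.coe_le_coe]
      linarith

-- key2: from x + (-c) ≤ b get negB b + x ≤ c
lemma key2 {b x : Rmax} {c : ℝ} (h : x + ((-c : ℝ) : Rmax) ≤ b) : negB b + x ≤ (c : Rmax) := by
  induction b using WithBot.recBotCoe with
  | bot => simp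
  | coe u =>
    induction x using WithBot.recBotCoe with
    | bot => simp
    | coe s =>
      rw [← WithBot.coe_add, WithBot.coe_le_coe] at h
      rw [negB_coe, ← WithBot.coe_add, WithBot.coe_le_coe]
      linarith

lemma key3 (x : Rmax) (a b : ℝ) : ((a : Rmax) + x) + (b : Rmax) = x + ((a + b : ℝ) : Rmax) := by
  induction x using WithBot.recBotCoe with
  | bot => simp
  | coe s => rw [← WithBot.coe_add, ← WithBot.coe_add, ← WithBot.coe_add]; ring_nf

lemma max_add_right (a b c : Rmax) : max a b + c = max (a + c) (b + c) := by
  rcases le_total a b with h | h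
  · rw [max_eq_right h, max_eq_right (add_le_add_left h c)]
  · rw [max_eq_left h, max_eq_left (add_le_add_left h c)]

lemma add_coe_le_iff {a b : Rmax} {l : ℝ} : a + (l : Rmax) ≤ b ↔ a ≤ b + ((-l : ℝ) : Rmax) := by
  induction a using WithBot.recBotCoe with
  | bot => simp
  | coe s =>
    induction b using WithBot.recBotCoe with
    | bot => simp [← WithBot.coe_add]
    | coe r =>
      rw [← WithBot.coe_add, ← WithBot.coe_add, WithBot.coe_le_coe, WithBot.coe_le_coe]
      constructor <;> intro h <;> linarith

lemma add_coe_mono {a : Rmax} {l l' : ℝ} (h : l ≤ l') : a + (l : Rmax) ≤ a + (l' : Rmax) :=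
  add_le_add_right (WithBot.coe_le_coe.mpr h) a

lemma le_of_forall_add_eps {a b : Rmax} (h : ∀ ε : ℝ, 0 < ε → a ≤ b + (ε : Rmax)) : a ≤ b := by
  induction b using WithBot.recBotCoe with
  | bot => simpa using h 1 one_pos
  | coe r =>
    induction a using WithBot.recBotCoe with
    | bot => simp
    | coe s =>
      rw [WithBot.coe_le_coe]
      by_contra hc
      push_neg at hc
      have := h ((s - r)/2) (by linarith)
      rw [← WithBot.coe_add, WithBot.coe_le_coe] at this
      linarith

lemma bot_of_add_le_bot {a : Rmax} {l : ℝ} (h : a + (l : Rmax) ≤ ⊥) : a = ⊥ := by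
  rw [le_bot_iff, WithBot.add_eq_bot] at h
  rcases h with h | h
  · exact h
  · exact absurd h (WithBot.coe_ne_bot)

end Sep

namespace Sep


lemma caseC {ι : Type} (C : Set (ι → Rmax)) (hconv : MPConvexI C)
    (hdir : DirStable C) (hfilt : FiltStable C)
    (y : ι → Rmax) (hy : y ∉ C)
    (harch : ∀ v ∈ C, ∃ lam : ℝ, ∀ i, v i + (lam : Rmax) ≤ y i)
    (hCne : C.Nonempty)
    (hgood : ∀ i, y i ≠ ⊥ → ∃ v ∈ C, v i ≠ ⊥) :
    ∃ (w' w'' : ι → Rmax) (d' d'' : Rmax),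
      (∀ x ∈ C,
        max (⨆ i, Rmax.toE (w' i + x i)) (Rmax.toE d') =
          max (⨆ i, Rmax.toE (w'' i + x i)) (Rmax.toE d'')) ∧
      max (⨆ i, Rmax.toE (w' i + y i)) (Rmax.toE d') ≠
        max (⨆ i, Rmax.toE (w'' i + y i)) (Rmax.toE d'') := by
  -- the scaled down-set and its coordinatewise sup
  set S : ι → Set Rmax := fun i =>
    {u | ∃ v ∈ C, ∃ l : ℝ, l ≤ 0 ∧ (∀ k, v k + (l : Rmax) ≤ y k) ∧ u = v i + (l : Rmax)}
    with hS
  set z : ι → Rmax := fun i => sSup (S i) with hz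
  set Λ : Set ℝ := {l | l ≤ 0 ∧ ∃ v ∈ C, ∀ k, v k + (l : Rmax) ≤ y k} with hΛ
  set μ : ℝ := sSup Λ with hμ
  -- a normalized archimedean scaling for every v ∈ C
  have harch' : ∀ v ∈ C, ∃ l : ℝ, l ≤ 0 ∧ ∀ k, v k + (l : Rmax) ≤ y k := by
    intro v hv
    obtain ⟨lam, hlam⟩ := harch v hv
    refine ⟨min lam 0, min_le_right _ _, fun k => le_trans ?_ (hlam k)⟩
    exact add_coe_mono (min_le_left _ _)
  obtain ⟨v₀, hv₀C⟩ := hCne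
  obtain ⟨l₀, hl₀0, hv₀l₀⟩ := harch' v₀ hv₀C
  have hΛne : Λ.Nonempty := ⟨l₀, hl₀0, v₀, hv₀C, hv₀l₀⟩
  have hΛbdd : BddAbove Λ := ⟨0, fun l hl => hl.1⟩
  have hμ0 : μ ≤ 0 := csSup_le hΛne fun l hl => hl.1
  have hSne : ∀ i, (S i).Nonempty := fun i => ⟨v₀ i + (l₀ : Rmax), v₀, hv₀C, l₀, hl₀0, hv₀l₀, rfl⟩
  have hSbdd : ∀ i, BddAbove (S i) := by
    intro i
    refine ⟨y i, ?_⟩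
    rintro u ⟨v, hv, l, hl, hvl, rfl⟩
    exact hvl i
  have hzy : ∀ i, z i ≤ y i := by
    intro i
    refine csSup_le (hSne i) ?_
    rintro u ⟨v, hv, l, hl, hvl, rfl⟩
    exact hvl i
  have hybot : ∀ x ∈ C, ∀ i, y i = ⊥ → x i = ⊥ := by
    intro x hx i hyi
    obtain ⟨lam, hlam⟩ := harch x hx
    exact bot_of_add_le_bot (hyi ▸ hlam i)
  have hzbot : ∀ i, z i = ⊥ → y i = ⊥ := by
    intro i hzi
    by_contra hyi
    obtain ⟨v, hvC, hvi⟩ := hgood i hyi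
    obtain ⟨l, hl0, hvl⟩ := harch' v hvC
    have hmem : v i + (l : Rmax) ∈ S i := ⟨v, hvC, l, hl0, hvl, rfl⟩
    have h2 : v i + (l : Rmax) ≤ z i := le_csSup (hSbdd i) hmem
    rw [hzi, le_bot_iff] at h2
    exact hvi (bot_of_add_le_bot h2.le)
  -- pointwise comparison of the two functionals
  have hterm : ∀ (x : ι → Rmax) (i : ι),
      Rmax.toE (negB (y i) + x i) ≤ Rmax.toE (negB (z i) + x i) := by
    intro x i
    rw [toE_le_toE_iff]
    rcases hzi : z i with _ | u
    · rw [hzbot i hzi]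
      exact le_rfl
    · simp only [WithBot.some_eq_coe] at hzi ⊢
      have hzy' := hzy i
      rw [hzi] at hzy'
      have hyne : y i ≠ ⊥ := by
        intro h
        rw [h, le_bot_iff] at hzy'
        exact WithBot.coe_ne_bot hzy'
      obtain ⟨r, hr⟩ := WithBot.ne_bot_iff_exists.mp hyne
      rw [← hr] at hzy' ⊢
      rw [WithBot.coe_le_coe] at hzy'
      refine add_le_add_left ?_ _
      rw [negB_coe, negB_coe, WithBot.coe_le_coe]
      linarith
  have hflee : ∀ x : ι → Rmax,
      max (⨆ i, Rmax.toE (negB (y i) + x i)) (Rmax.toE 0) ≤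
      max (⨆ i, Rmax.toE (negB (z i) + x i)) (Rmax.toE ((-μ : ℝ) : Rmax)) := by
    intro x
    refine max_le_max (iSup_mono (hterm x)) ?_
    rw [toE_zero, toE_coe]
    exact_mod_cast (by linarith : (0:ℝ) ≤ -μ)
  -- the two affine functionals
  refine ⟨fun i => negB (y i), fun i => negB (z i), 0, ((-μ : ℝ) : Rmax), ?_, ?_⟩
  · -- equality on C
    intro x hx
    show max (⨆ i, Rmax.toE (negB (y i) + x i)) (Rmax.toE 0) =
      max (⨆ i, Rmax.toE (negB (z i) + x i)) (Rmax.toE ((-μ : ℝ) : Rmax))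
    refine le_antisymm (hflee x) ?_
    set t := max (⨆ i, Rmax.toE (negB (y i) + x i)) (Rmax.toE 0) with ht
    have h0t : (0 : EReal) ≤ t := by
      rw [ht, toE_zero]
      exact le_max_right _ _
    by_cases htop : t = ⊤
    · rw [htop]; exact le_top
    · obtain ⟨c, hc⟩ : ∃ c : ℝ, t = (c : EReal) := by
        clear_value t
        induction t using EReal.rec with
        | bot => exact absurd (le_bot_iff.mp h0t) (by norm_num)
        | coe r => exact ⟨r, rfl⟩
        | top => exact absurd rfl htop
      have hc0 : (0:ℝ) ≤ c := by
        rw [hc] at h0t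
        exact_mod_cast h0t
      have hxle : ∀ i, Rmax.toE (negB (y i) + x i) ≤ (c : EReal) := by
        intro i
        rw [← hc, ht]
        exact le_trans (le_iSup (fun j => Rmax.toE (negB (y j) + x j)) i) (le_max_left _ _)
      have hxc : ∀ k, x k + ((-c : ℝ) : Rmax) ≤ y k := by
        intro k
        exact key1 (hybot x hx k) (toE_coe_le_coe.mp (hxle k))
      have hmemΛ : (-c) ∈ Λ := ⟨by linarith, x, hx, hxc⟩
      have hμc : -c ≤ μ := le_csSup hΛbdd hmemΛ
      refine max_le ?_ ?_
      · refine iSup_le fun i => ?_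
        have hzge : x i + ((-c : ℝ) : Rmax) ≤ z i :=
          le_csSup (hSbdd i) ⟨x, hx, -c, by linarith, hxc, rfl⟩
        rw [hc]
        exact toE_coe_le_coe.mpr (key2 hzge)
      · rw [hc, toE_coe]
        exact_mod_cast (by linarith : -μ ≤ c)
  · -- strict at y
    show max (⨆ i, Rmax.toE (negB (y i) + y i)) (Rmax.toE 0) ≠
      max (⨆ i, Rmax.toE (negB (z i) + y i)) (Rmax.toE ((-μ : ℝ) : Rmax))
    intro heq
    have hfy : (⨆ i, Rmax.toE (negB (y i) + y i)) ≤ 0 := by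
      refine iSup_le fun i => ?_
      induction y i using WithBot.recBotCoe with
      | bot => exact bot_le
      | coe r =>
        rw [negB_coe, ← WithBot.coe_add, toE_coe]
        exact_mod_cast (by linarith : -r + r ≤ (0:ℝ))
    have hfy0 : max (⨆ i, Rmax.toE (negB (y i) + y i)) (Rmax.toE 0) = 0 := by
      rw [toE_zero]
      exact max_eq_right hfy
    have heq' : max (⨆ i, Rmax.toE (negB (z i) + y i)) (Rmax.toE ((-μ : ℝ) : Rmax)) = 0 :=
      heq.symm.trans hfy0
    have hμ_eq : μ = 0 := by
      have h1 : Rmax.toE ((-μ : ℝ) : Rmax) ≤ 0 := heq' ▸ le_max_right _ _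
      rw [toE_coe] at h1
      have : -μ ≤ (0:ℝ) := by exact_mod_cast h1
      linarith
    have hz_eq : ∀ i, z i = y i := by
      intro i
      have hle : Rmax.toE (negB (z i) + y i) ≤ 0 :=
        heq' ▸ le_trans (le_iSup (fun j => Rmax.toE (negB (z j) + y j)) i) (le_max_left _ _)
      rcases hzi : z i with _ | u
      · rw [hzbot i hzi]; rfl
      · simp only [WithBot.some_eq_coe] at hzi ⊢
        have hzyi := hzy i
        rw [hzi] at hzyi
        have hyne : y i ≠ ⊥ := by
          intro h
          rw [h, le_bot_iff] at hzyi
          exact WithBot.coe_ne_bot hzyi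
        obtain ⟨r, hr⟩ := WithBot.ne_bot_iff_exists.mp hyne
        rw [← hr] at hzyi ⊢
        rw [WithBot.coe_le_coe] at hzyi
        rw [hzi, ← hr, negB_coe, ← WithBot.coe_add, toE_coe] at hle
        have : -u + r ≤ (0:ℝ) := by exact_mod_cast hle
        rw [WithBot.coe_inj]
        linarith
    -- the directed/filtered contradiction
    set Dset : ℝ → Set (ι → Rmax) :=
      fun ε => {v | v ∈ C ∧ ∀ k, v k ≤ y k + (ε : Rmax)} with hDset
    have hlam : ∀ ε : ℝ, 0 < ε → ∃ l₁ ∈ Λ, -ε < l₁ := by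
      intro ε hε
      exact exists_lt_of_lt_csSup hΛne (by rw [← hμ, hμ_eq]; linarith)
    have hDne : ∀ ε : ℝ, 0 < ε → (Dset ε).Nonempty := by
      intro ε hε
      obtain ⟨l₁, ⟨hl₁0, v₁, hv₁C, hv₁⟩, hl₁gt⟩ := hlam ε hε
      exact ⟨v₁, hv₁C, fun k =>
        le_trans (add_coe_le_iff.mp (hv₁ k)) (add_coe_mono (by linarith))⟩
    have hDbdd : ∀ ε : ℝ, BddAbove (Dset ε) :=
      fun ε => ⟨fun k => y k + (ε : Rmax), fun v hv => hv.2⟩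
    have hDdir : ∀ ε : ℝ, DirectedOn (· ≤ ·) (Dset ε) := by
      intro ε a ⟨haC, hay⟩ b ⟨hbC, hby⟩
      have hmemC := hconv a haC b hbC 0 0 (max_self 0)
      refine ⟨fun i => max (0 + a i) (0 + b i), ⟨hmemC, fun k => ?_⟩, fun k => ?_, fun k => ?_⟩
      · simp only [zero_add]
        exact max_le (hay k) (hby k)
      · simp only [zero_add]
        exact le_max_left _ _
      · simp only [zero_add]
        exact le_max_right _ _
    have hPub : ∀ ε : ℝ, 0 < ε → sSup (Dset ε) ≤ fun k => y k + (ε : Rmax) := by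
      intro ε hε
      exact csSup_le (hDne ε hε) fun v hv => hv.2
    have hPy : ∀ ε : ℝ, 0 < ε → ∀ i, y i ≤ sSup (Dset ε) i := by
      intro ε hε i
      rw [← hz_eq i]
      obtain ⟨l₁, ⟨hl₁0, v₁, hv₁C, hv₁⟩, hl₁gt⟩ := hlam ε hε
      show sSup (S i) ≤ sSup (Dset ε) i
      refine csSup_le (hSne i) ?_
      rintro u ⟨v, hvC, l, hl0, hvl, rfl⟩
      set m := max l l₁ with hm
      have hm0 : m ≤ 0 := max_le hl0 hl₁0
      have hmgt : -ε < m := lt_of_lt_of_le hl₁gt (le_max_right _ _)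
      have hmax : max ((l - m : ℝ) : Rmax) ((l₁ - m : ℝ) : Rmax) = 0 := by
        have h5 : max (l - m) (l₁ - m) = 0 := by
          rw [max_sub_sub_right, ← hm, sub_self]
        exact_mod_cast congrArg (fun r : ℝ => (r : Rmax)) h5
      have hu'C := hconv v hvC v₁ hv₁C _ _ hmax
      set u' : ι → Rmax :=
        fun k => max (((l - m : ℝ) : Rmax) + v k) (((l₁ - m : ℝ) : Rmax) + v₁ k) with hu'
      have hu'y : ∀ k, u' k + (m : Rmax) ≤ y k := by
        intro k
        have e1 : u' k + (m : Rmax) = max (v k + (l : Rmax)) (v₁ k + (l₁ : Rmax)) := by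
          show max (((l - m : ℝ) : Rmax) + v k) (((l₁ - m : ℝ) : Rmax) + v₁ k) + (m : Rmax) = _
          rw [max_add_right, key3, key3, sub_add_cancel, sub_add_cancel]
        rw [e1]
        exact max_le (hvl k) (hv₁ k)
      have hu'mem : u' ∈ Dset ε := ⟨hu'C, fun k =>
        le_trans (add_coe_le_iff.mp (hu'y k)) (add_coe_mono (by linarith))⟩
      have h1 : v i + (l : Rmax) ≤ u' i + (m : Rmax) := by
        have h6 : ((l - m : ℝ) : Rmax) + v i ≤ u' i := le_max_left _ _
        calc v i + (l : Rmax) = (((l - m : ℝ) : Rmax) + v i) + (m : Rmax) := by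
              rw [key3, sub_add_cancel]
          _ ≤ u' i + (m : Rmax) := add_le_add_left h6 _
      have h2 : u' i + (m : Rmax) ≤ u' i := by
        calc u' i + (m : Rmax) ≤ u' i + ((0 : ℝ) : Rmax) := add_coe_mono hm0
          _ = u' i := by rw [WithBot.coe_zero, add_zero]
      have h3 : u' ≤ sSup (Dset ε) := le_csSup (hDbdd ε) hu'mem
      exact le_trans h1 (le_trans h2 (h3 i))
    have hmono : ∀ ε₁ ε₂ : ℝ, 0 < ε₁ → ε₁ ≤ ε₂ → sSup (Dset ε₁) ≤ sSup (Dset ε₂) := by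
      intro ε₁ ε₂ h₁ h₁₂
      refine csSup_le_csSup (hDbdd ε₂) (hDne ε₁ h₁) ?_
      rintro v ⟨hvC, hv⟩
      exact ⟨hvC, fun k => le_trans (hv k) (add_coe_mono h₁₂)⟩
    set F : Set (ι → Rmax) := {w | ∃ ε : ℝ, 0 < ε ∧ w = sSup (Dset ε)} with hF
    have hFne : F.Nonempty := ⟨sSup (Dset 1), 1, one_pos, rfl⟩
    have hFsub : F ⊆ C := by
      rintro w ⟨ε, hε, rfl⟩
      exact hdir (Dset ε) (fun v hv => hv.1) (hDne ε hε) (hDdir ε) (hDbdd ε)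
    have hFdir : DirectedOn (· ≥ ·) F := by
      rintro a ⟨ε₁, h₁, rfl⟩ b ⟨ε₂, h₂, rfl⟩
      refine ⟨sSup (Dset (min ε₁ ε₂)), ⟨min ε₁ ε₂, lt_min h₁ h₂, rfl⟩, ?_, ?_⟩
      · exact hmono _ _ (lt_min h₁ h₂) (min_le_left _ _)
      · exact hmono _ _ (lt_min h₁ h₂) (min_le_right _ _)
    have hqC : sInf F ∈ C := hfilt F hFsub hFne hFdir
    have hq_ge : y ≤ sInf F := by
      refine le_csInf hFne ?_
      rintro w ⟨ε, hε, rfl⟩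
      intro i
      exact hPy ε hε i
    have hq_le : sInf F ≤ y := by
      intro i
      refine le_of_forall_add_eps fun ε hε => ?_
      have h4 : sInf F ≤ sSup (Dset ε) := csInf_le (OrderBot.bddBelow F) ⟨ε, hε, rfl⟩
      exact le_trans (h4 i) (hPub ε hε i)
    exact hy (le_antisymm hq_le hq_ge ▸ hqC)


end Sep

/-- **Separation of a point from an order-closed max-plus convex subset of
`ℝmax^ι`, under an Archimedean assumption, by a max-plus affine hyperplane.** -/
theorem stmt9 {ι : Type} (C : Set (ι → Rmax)) (hconv : MPConvexI C)
    (hdir : DirStable C) (hfilt : FiltStable C)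
    (y : ι → Rmax) (hy : y ∉ C)
    (harch : ∀ v ∈ C, ∃ lam : ℝ, ∀ i, v i + (lam : Rmax) ≤ y i) :
    ∃ (w' w'' : ι → Rmax) (d' d'' : Rmax),
      (∀ x ∈ C,
        max (⨆ i, Rmax.toE (w' i + x i)) (Rmax.toE d') =
          max (⨆ i, Rmax.toE (w'' i + x i)) (Rmax.toE d'')) ∧
      max (⨆ i, Rmax.toE (w' i + y i)) (Rmax.toE d') ≠
        max (⨆ i, Rmax.toE (w'' i + y i)) (Rmax.toE d'') := by
  classical
  by_cases hCne : C.Nonempty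
  · by_cases hbad : ∃ j, y j ≠ ⊥ ∧ ∀ v ∈ C, v j = ⊥
    · -- a coordinate where C is identically ⊥ but y is not
      obtain ⟨j, hyj, hvj⟩ := hbad
      obtain ⟨r, hr⟩ := WithBot.ne_bot_iff_exists.mp hyj
      refine ⟨fun i => if i = j then ((1 - r : ℝ) : Rmax) else ⊥, fun _ => ⊥, 0, 0, ?_, ?_⟩
      · intro x hx
        have h1 : ∀ i : ι, Rmax.toE ((if i = j then ((1 - r : ℝ) : Rmax) else ⊥) + x i) = ⊥ := by
          intro i
          by_cases hij : i = j
          · subst hij; rw [if_pos rfl, hvj x hx, WithBot.add_bot]; rfl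
          · rw [if_neg hij, WithBot.bot_add]; rfl
        have h2 : ∀ i : ι, Rmax.toE ((⊥ : Rmax) + x i) = ⊥ := by
          intro i; rw [WithBot.bot_add]; rfl
        simp only [h1, h2]
      · intro heq
        have h1 : (1 : EReal) ≤ max (⨆ i, Rmax.toE ((if i = j then ((1 - r : ℝ) : Rmax) else ⊥) + y i)) (Rmax.toE 0) := by
          refine le_trans ?_ (le_max_left _ _)
          refine le_trans ?_ (le_iSup _ j)
          rw [if_pos rfl, ← hr, ← WithBot.coe_add, Sep.toE_coe]
          norm_num
        have h2 : max (⨆ i, Rmax.toE ((⊥ : Rmax) + y i)) (Rmax.toE 0) = 0 := by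
          have : ∀ i : ι, Rmax.toE ((⊥ : Rmax) + y i) = ⊥ := fun i => by rw [WithBot.bot_add]; rfl
          simp [this]
        rw [heq, h2] at h1
        exact absurd h1 (by norm_num)
    · -- the main case
      push_neg at hbad
      refine Sep.caseC C hconv hdir hfilt y hy harch hCne ?_
      intro i hi
      obtain ⟨v, hvC, hvi⟩ := hbad i hi
      exact ⟨v, hvC, hvi⟩
  · -- C is empty
    refine ⟨fun _ => ⊥, fun _ => ⊥, 0, 1, ?_, ?_⟩
    · intro x hx; exact absurd ⟨x, hx⟩ hCne
    · have hb : ∀ x : ι → Rmax, (⨆ i, Rmax.toE ((⊥ : Rmax) + x i)) = ⊥ := by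
        intro x
        simp [WithBot.bot_add]
      rw [hb]
      intro h
      have h1 : Rmax.toE 1 = (1 : EReal) := rfl
      simp only [Sep.toE_zero, h1, bot_sup_eq, sup_bot_eq] at h
      norm_num at h


end
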